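/- Let q be a prime power and k ≥ 2 a divisor of q−1. The number of near-linear cyclotomic orthomorphisms of index k over F_q is exactly (q−1−k)(q−1−2k)/k². -/

import Mathlib

/-- An orthomorphism over a finite field: a permutation `θ` such that
`x ↦ θ x - x` is also a permutation. -/
def IsOrthomorphism {F : Type*} [Field F] [Fintype F] (θ : F → F) : Prop :=
  Function.Bijective θ ∧ Function.Bijective (fun x => θ x - x)

/-- The cyclotomic map `θ` of index `k` is near-linear if it has multiplier `a₀` on the
class `C_{k,0}` (the nonzero `k`-th powers) and a common multiplier
`a₁ = a₂ = ⋯ = a_{k-1}` on all other classes, with `a₀ ≠ a₁`. -/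
def IsNearLinear {F : Type*} [Field F] [Fintype F] (k : ℕ) (θ : F → F) : Prop :=
  ∃ a₀ a₁ : F, a₀ ≠ a₁ ∧ θ 0 = 0 ∧
    ∀ x : F, x ≠ 0 →
      (((∃ z : F, x = z ^ k) → θ x = a₀ * x) ∧ (¬ (∃ z : F, x = z ^ k) → θ x = a₁ * x))

set_option linter.unusedSectionVars false

section NW

variable {F : Type*} [Field F] [Fintype F]

/-- `x` is a `k`-th power. -/
private abbrev KP (k : ℕ) (x : F) : Prop := ∃ z : F, x = z ^ k

private lemma KP_one (k : ℕ) : KP k (1 : F) := ⟨1, (one_pow k).symm⟩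

private lemma KP_mul {k : ℕ} {x y : F} (hx : KP k x) (hy : KP k y) : KP k (x * y) := by
  obtain ⟨z, rfl⟩ := hx; obtain ⟨w, rfl⟩ := hy; exact ⟨z * w, (mul_pow z w k).symm⟩

private lemma KP_inv {k : ℕ} {x : F} (hx : KP k x) : KP k x⁻¹ := by
  obtain ⟨z, rfl⟩ := hx; exact ⟨z⁻¹, (inv_pow z k).symm⟩

open Classical in
/-- The near-linear cyclotomic map with multipliers `a` and `b`. -/
private noncomputable def th (k : ℕ) (a b : F) : F → F :=
  fun x => if x = 0 then 0 else if KP k x then a * x else b * x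

private lemma th_apply_zero {k : ℕ} {a b : F} : th k a b 0 = 0 := by
  simp [th]

private lemma th_apply_pow {k : ℕ} {a b x : F} (hx : x ≠ 0) (hp : KP k x) :
    th k a b x = a * x := by
  simp only [th, if_neg hx, if_pos hp]

private lemma th_apply_npow {k : ℕ} {a b x : F} (hx : x ≠ 0) (hp : ¬ KP k x) :
    th k a b x = b * x := by
  simp only [th, if_neg hx, if_neg hp]

private lemma th_sub (k : ℕ) (a b : F) :
    (fun x => th k a b x - x) = th k (a - 1) (b - 1) := by
  funext x
  by_cases hx : x = 0
  · subst hx; simp [th_apply_zero]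
  by_cases hp : KP k x
  · rw [th_apply_pow hx hp, th_apply_pow hx hp]; ring
  · rw [th_apply_npow hx hp, th_apply_npow hx hp]; ring

private lemma th_injective {k : ℕ} {a b : F} (ha : a ≠ 0) (hb : b ≠ 0)
    (hab : KP k (a / b)) : Function.Injective (th k a b) := by
  have hne : ∀ x : F, x ≠ 0 → th k a b x ≠ 0 := by
    intro x hx
    by_cases hp : KP k x
    · rw [th_apply_pow hx hp]; exact mul_ne_zero ha hx
    · rw [th_apply_npow hx hp]; exact mul_ne_zero hb hx
  intro x y h
  by_cases hx : x = 0
  · subst hx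
    by_contra hy'
    exact hne y (Ne.symm hy') (by rw [← h, th_apply_zero])
  by_cases hy : y = 0
  · subst hy
    exact absurd (by rw [h, th_apply_zero] : th k a b x = 0) (hne x hx)
  by_cases px : KP k x <;> by_cases py : KP k y
  · rw [th_apply_pow hx px, th_apply_pow hy py] at h
    exact mul_left_cancel₀ ha h
  · exfalso
    rw [th_apply_pow hx px, th_apply_npow hy py] at h
    apply py
    have hyx : y = a / b * x := by
      rw [div_mul_eq_mul_div, eq_div_iff hb, mul_comm y b]
      exact h.symm
    rw [hyx]; exact KP_mul hab px
  · exfalso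
    rw [th_apply_npow hx px, th_apply_pow hy py] at h
    apply px
    have hxy : x = a / b * y := by
      rw [div_mul_eq_mul_div, eq_div_iff hb, mul_comm x b]
      exact h
    rw [hxy]; exact KP_mul hab py
  · rw [th_apply_npow hx px, th_apply_npow hy py] at h
    exact mul_left_cancel₀ hb h

private lemma card_units' : Nat.card Fˣ = Fintype.card F - 1 := by
  classical
  rw [Nat.card_eq_fintype_card, Fintype.card_units]

/-- There is a nonzero non-`k`-th-power when `2 ≤ k ∣ q - 1`. -/
private lemma exists_nonpow (k : ℕ) (hk : 2 ≤ k) (hdvd : k ∣ Fintype.card F - 1) :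
    ∃ g : F, g ≠ 0 ∧ ¬ KP k g := by
  classical
  obtain ⟨ζ, hζ⟩ := IsCyclic.exists_generator (α := Fˣ)
  refine ⟨(ζ : F), Units.ne_zero ζ, ?_⟩
  rintro ⟨z, hz⟩
  have hz0 : z ≠ 0 := by
    rintro rfl
    rw [zero_pow (by omega : k ≠ 0)] at hz
    exact Units.ne_zero ζ hz
  have huζ : ζ = (Units.mk0 z hz0) ^ k := by
    ext
    rw [hz]; push_cast; rfl
  obtain ⟨m, hm⟩ := hdvd
  have hcard : orderOf ζ = Nat.card Fˣ := orderOf_eq_card_of_forall_mem_zpowers hζ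
  have hFu : Nat.card Fˣ = Fintype.card F - 1 := card_units'
  have h1 : ζ ^ m = 1 := by
    rw [huζ, ← pow_mul, ← hm, ← hFu, Nat.card_eq_fintype_card]
    exact pow_card_eq_one
  have h2 : Fintype.card F - 1 ∣ m := by
    rw [← hFu, ← hcard]
    exact orderOf_dvd_of_pow_eq_one h1
  have hq : 2 ≤ Fintype.card F := Fintype.one_lt_card
  have hm0 : 0 < m := by
    rcases Nat.eq_zero_or_pos m with rfl | h
    · rw [Nat.mul_zero] at hm; omega
    · exact h
  have hle : Fintype.card F - 1 ≤ m := Nat.le_of_dvd hm0 h2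
  have : 2 * m ≤ k * m := Nat.mul_le_mul_right m hk
  omega

/-- The set of nonzero `k`-th powers has `(q-1)/k` elements. -/
private lemma ncard_pows (k : ℕ) (hk : 0 < k) {m : ℕ} (hm : Fintype.card F - 1 = k * m) :
    {x : F | x ≠ 0 ∧ KP k x}.ncard = m := by
  classical
  obtain ⟨ζ, hζ⟩ := IsCyclic.exists_generator (α := Fˣ)
  have hpow : ∀ n : ℤ, (((ζ ^ k) ^ n : Fˣ) : F) = (((ζ ^ n : Fˣ) : F)) ^ k := by
    intro n
    have : (ζ ^ k) ^ n = (ζ ^ n) ^ k := by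
      rw [← zpow_natCast (ζ ^ n) k, ← zpow_mul, ← zpow_natCast ζ k, ← zpow_mul, mul_comm]
    rw [this]; push_cast; rfl
  have himg : {x : F | x ≠ 0 ∧ KP k x}
      = (fun u : Fˣ => (u : F)) '' (↑(Subgroup.zpowers (ζ ^ k)) : Set Fˣ) := by
    ext x
    constructor
    · rintro ⟨hx, z, rfl⟩
      have hz0 : z ≠ 0 := by
        rintro rfl; exact hx (by rw [zero_pow hk.ne'])
      obtain ⟨n, hn⟩ := hζ (Units.mk0 z hz0)
      have hn' : ζ ^ n = Units.mk0 z hz0 := hn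
      refine ⟨(ζ ^ k) ^ n, ⟨n, rfl⟩, ?_⟩
      show (((ζ ^ k) ^ n : Fˣ) : F) = z ^ k
      rw [hpow n, hn']
      rfl
    · rintro ⟨u, ⟨n, rfl⟩, rfl⟩
      exact ⟨Units.ne_zero _, ⟨((ζ ^ n : Fˣ) : F), hpow n⟩⟩
  rw [himg, Set.ncard_image_of_injective _ Units.val_injective]
  have h1 : (↑(Subgroup.zpowers (ζ ^ k)) : Set Fˣ).ncard = orderOf (ζ ^ k) := by
    rw [← Nat.card_coe_set_eq]
    exact Nat.card_zpowers _
  rw [h1, orderOf_pow, orderOf_eq_card_of_forall_mem_zpowers hζ, card_units', hm,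
    Nat.gcd_eq_right ⟨m, rfl⟩, Nat.mul_div_cancel_left m hk]

/-- The parameter set for near-linear orthomorphisms. -/
private def Aset (F : Type*) [Field F] [Fintype F] (k : ℕ) : Set (F × F) :=
  {p | p.1 ≠ p.2 ∧ p.1 ≠ 0 ∧ p.2 ≠ 0 ∧ p.1 ≠ 1 ∧ p.2 ≠ 1 ∧
    KP k (p.1 / p.2) ∧ KP k ((p.1 - 1) / (p.2 - 1))}

private def Bset (F : Type*) [Field F] [Fintype F] (k : ℕ) : Set (F × F) :=
  {p | (p.1 ≠ 0 ∧ KP k p.1) ∧ p.1 ≠ 1 ∧ (p.2 ≠ 0 ∧ KP k p.2) ∧ p.2 ≠ 1 ∧ p.1 ≠ p.2}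

private lemma mem_A_orth {k : ℕ} {a b : F} (h : (a, b) ∈ Aset F k) :
    IsOrthomorphism (th k a b) ∧ IsNearLinear k (th k a b) := by
  obtain ⟨hab, ha0, hb0, ha1, hb1, hdiv, hdiv1⟩ := h
  refine ⟨⟨?_, ?_⟩, ?_⟩
  · exact Finite.injective_iff_bijective.mp (th_injective ha0 hb0 hdiv)
  · rw [th_sub]
    exact Finite.injective_iff_bijective.mp
      (th_injective (sub_ne_zero.mpr ha1) (sub_ne_zero.mpr hb1) hdiv1)
  · exact ⟨a, b, hab, th_apply_zero,
      fun x hx => ⟨fun hp => th_apply_pow hx hp, fun hp => th_apply_npow hx hp⟩⟩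

private lemma orth_mem {k : ℕ} (hk : 2 ≤ k) (hdvd : k ∣ Fintype.card F - 1)
    {θ : F → F} (hθ : IsOrthomorphism θ ∧ IsNearLinear k θ) :
    ∃ p : F × F, p ∈ Aset F k ∧ θ = th k p.1 p.2 := by
  obtain ⟨⟨hbij, hbij'⟩, a, b, hab, h0, hx⟩ := hθ
  have hθeq : θ = th k a b := by
    funext x
    by_cases hx0 : x = 0
    · subst hx0; rw [h0, th_apply_zero]
    by_cases hp : KP k x
    · rw [(hx x hx0).1 hp, th_apply_pow hx0 hp]
    · rw [(hx x hx0).2 hp, th_apply_npow hx0 hp]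
  subst hθeq
  obtain ⟨g, hg0, hgp⟩ := exists_nonpow k hk hdvd
  have ha0 : a ≠ 0 := by
    rintro rfl
    have h1 : th k 0 b 1 = th k 0 b 0 := by
      rw [th_apply_zero, th_apply_pow one_ne_zero (KP_one k), zero_mul]
    exact one_ne_zero (hbij.1 h1)
  have hb0 : b ≠ 0 := by
    rintro rfl
    have h1 : th k a 0 g = th k a 0 0 := by
      rw [th_apply_zero, th_apply_npow hg0 hgp, zero_mul]
    exact hg0 (hbij.1 h1)
  rw [th_sub] at hbij'
  have ha1 : a ≠ 1 := by
    rintro rfl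
    have h1 : th k (1 - 1) (b - 1) 1 = th k (1 - 1) (b - 1) 0 := by
      rw [th_apply_zero, th_apply_pow one_ne_zero (KP_one k)]
      norm_num
    exact one_ne_zero (hbij'.1 h1)
  have hb1 : b ≠ 1 := by
    rintro rfl
    have h1 : th k (a - 1) (1 - 1) g = th k (a - 1) (1 - 1) 0 := by
      rw [th_apply_zero, th_apply_npow hg0 hgp]
      norm_num
    exact hg0 (hbij'.1 h1)
  have hdiv : KP k (a / b) := by
    obtain ⟨x, hxv⟩ := hbij.2 b
    have hx0 : x ≠ 0 := by
      rintro rfl; rw [th_apply_zero] at hxv; exact hb0 hxv.symm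
    by_cases hp : KP k x
    · rw [th_apply_pow hx0 hp] at hxv
      have hxba : x = b / a := by
        rw [eq_div_iff ha0, mul_comm]; exact hxv
      have : KP k (b / a) := hxba ▸ hp
      have h' := KP_inv this
      rwa [inv_div] at h'
    · exfalso
      rw [th_apply_npow hx0 hp] at hxv
      have : x = 1 := by
        have := hxv.trans (mul_one b).symm
        exact mul_left_cancel₀ hb0 this
      exact hp (this ▸ KP_one k)
  have hdiv1 : KP k ((a - 1) / (b - 1)) := by
    obtain ⟨x, hxv⟩ := hbij'.2 (b - 1)
    have hb1' : b - 1 ≠ 0 := sub_ne_zero.mpr hb1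
    have hx0 : x ≠ 0 := by
      rintro rfl; rw [th_apply_zero] at hxv; exact hb1' hxv.symm
    by_cases hp : KP k x
    · rw [th_apply_pow hx0 hp] at hxv
      have hxba : x = (b - 1) / (a - 1) := by
        rw [eq_div_iff (sub_ne_zero.mpr ha1), mul_comm]; exact hxv
      have : KP k ((b - 1) / (a - 1)) := hxba ▸ hp
      have h' := KP_inv this
      rwa [inv_div] at h'
    · exfalso
      rw [th_apply_npow hx0 hp] at hxv
      have : x = 1 := by
        have := hxv.trans (mul_one (b - 1)).symm
        exact mul_left_cancel₀ hb1' this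
      exact hp (this ▸ KP_one k)
  exact ⟨(a, b), ⟨hab, ha0, hb0, ha1, hb1, hdiv, hdiv1⟩, rfl⟩

private lemma th_injOn {k : ℕ} (hk : 2 ≤ k) (hdvd : k ∣ Fintype.card F - 1) :
    Set.InjOn (fun p : F × F => th k p.1 p.2) (Aset F k) := by
  obtain ⟨g, hg0, hgp⟩ := exists_nonpow k hk hdvd
  rintro ⟨a, b⟩ _ ⟨a', b'⟩ _ h
  have h' : th k a b = th k a' b' := h
  have h1 : a = a' := by
    have := congrFun h' 1
    rwa [th_apply_pow one_ne_zero (KP_one k), th_apply_pow one_ne_zero (KP_one k),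
      mul_one, mul_one] at this
  have h2 : b = b' := by
    have := congrFun h' g
    rw [th_apply_npow hg0 hgp, th_apply_npow hg0 hgp] at this
    exact mul_right_cancel₀ hg0 this
  simp [h1, h2]

private lemma bijOn_AB (k : ℕ) :
    Set.BijOn (fun p : F × F => ((p.2 - 1) / (p.1 - 1), p.2 / p.1)) (Aset F k) (Bset F k) := by
  refine ⟨?_, ?_, ?_⟩
  · rintro ⟨a, b⟩ ⟨hab, ha0, hb0, ha1, hb1, hdiv, hdiv1⟩
    have ha1' : a - 1 ≠ 0 := sub_ne_zero.mpr ha1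
    have hb1' : b - 1 ≠ 0 := sub_ne_zero.mpr hb1
    refine ⟨⟨div_ne_zero hb1' ha1', ?_⟩, ?_, ⟨div_ne_zero hb0 ha0, ?_⟩, ?_, ?_⟩
    · have := KP_inv hdiv1; rwa [inv_div] at this
    · intro h
      rw [div_eq_one_iff_eq ha1'] at h
      exact hab (show a = b by linear_combination -h)
    · have := KP_inv hdiv; rwa [inv_div] at this
    · intro h
      rw [div_eq_one_iff_eq ha0] at h
      exact hab h.symm
    · intro hst
      apply hab
      rw [div_eq_div_iff ha1' ha0] at hst
      linear_combination -hst
  · rintro ⟨a, b⟩ ⟨hab, ha0, hb0, ha1, hb1, _, _⟩ ⟨a', b'⟩ ⟨hab', ha0', hb0', ha1', hb1', _, _⟩ h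
    simp only [Prod.mk.injEq] at h
    obtain ⟨hs, ht⟩ := h
    rw [div_eq_div_iff (sub_ne_zero.mpr ha1) (sub_ne_zero.mpr ha1')] at hs
    rw [div_eq_div_iff ha0 ha0'] at ht
    have h3 : b + a' = b' + a := by linear_combination ht - hs
    have h4 : (a' - a) * (b - a) = 0 := by linear_combination ht - a * h3
    have h5 : a' = a := by
      rcases mul_eq_zero.mp h4 with h | h
      · exact sub_eq_zero.mp h
      · exact absurd (sub_eq_zero.mp h) (Ne.symm hab)
    have h6 : b' = b := by linear_combination h5 - h3
    simp [h5, h6]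
  · rintro ⟨s, t⟩ ⟨⟨hs0, hsp⟩, hs1, ⟨ht0, htp⟩, ht1, hst⟩
    have hts : t - s ≠ 0 := sub_ne_zero.mpr (Ne.symm hst)
    set a : F := (1 - s) / (t - s) with ha_def
    have ha0 : a ≠ 0 := div_ne_zero (sub_ne_zero.mpr (Ne.symm hs1)) hts
    have ha1sub : a - 1 = (1 - t) / (t - s) := by
      rw [ha_def]; field_simp; ring
    have ha1 : a ≠ 1 := by
      have h1t : (1 - t) / (t - s) ≠ 0 :=
        div_ne_zero (sub_ne_zero.mpr (Ne.symm ht1)) hts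
      intro h
      rw [h, sub_self] at ha1sub
      exact h1t ha1sub.symm
    have hb1sub : t * a - 1 = (a - 1) * s := by
      rw [ha_def]; field_simp; ring
    have hb0 : t * a ≠ 0 := mul_ne_zero ht0 ha0
    have hb1 : t * a ≠ 1 := by
      intro h
      have : (a - 1) * s = 0 := by rw [← hb1sub, h, sub_self]
      rcases mul_eq_zero.mp this with h' | h'
      · exact ha1 (by linear_combination h')
      · exact hs0 h'
    have habne : a ≠ t * a := by
      intro h
      apply ht1
      have : t * a = 1 * a := by rw [one_mul, ← h]
      exact mul_right_cancel₀ ha0 this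
    refine ⟨(a, t * a), ⟨habne, ha0, hb0, ha1, hb1, ?_, ?_⟩, ?_⟩
    · have h' : a / (t * a) = t⁻¹ := by
        rw [mul_comm t a, ← div_div, div_self ha0, one_div]
      rw [h']; exact KP_inv htp
    · have h' : (a - 1) / (t * a - 1) = s⁻¹ := by
        rw [hb1sub, ← div_div, div_self (sub_ne_zero.mpr ha1), one_div]
      rw [h']; exact KP_inv hsp
    · simp only [Prod.mk.injEq]
      constructor
      · rw [hb1sub, mul_comm, mul_div_assoc, div_self (sub_ne_zero.mpr ha1), mul_one]
      · exact mul_div_cancel_right₀ t ha0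

end NW

/-- Theorem 2.5 (Niederreiter–Winterhof).  The number of near-linear orthomorphisms
of index `k` over `F_q` is `(q - 1 - k)(q - 1 - 2k)/k²`. -/
theorem thm_numnearlin {F : Type*} [Field F] [Fintype F]
    (k : ℕ) (hk : 2 ≤ k) (hdvd : k ∣ Fintype.card F - 1) :
    {θ : F → F | IsOrthomorphism θ ∧ IsNearLinear k θ}.ncard =
      (Fintype.card F - 1 - k) * (Fintype.card F - 1 - 2 * k) / k ^ 2 := by
  classical
  obtain ⟨m, hm⟩ := hdvd
  have hk0 : 0 < k := by omega
  have hS : {θ : F → F | IsOrthomorphism θ ∧ IsNearLinear k θ}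
      = (fun p : F × F => th k p.1 p.2) '' Aset F k := by
    ext θ
    constructor
    · intro hθ
      obtain ⟨p, hp, rfl⟩ := orth_mem hk ⟨m, hm⟩ hθ
      exact ⟨p, hp, rfl⟩
    · rintro ⟨⟨a, b⟩, hp, rfl⟩
      exact mem_A_orth hp
  rw [hS, Set.ncard_image_of_injOn (th_injOn hk ⟨m, hm⟩)]
  have hAB := bijOn_AB (F := F) k
  have hA : (Aset F k).ncard = (Bset F k).ncard := by
    rw [← hAB.image_eq, Set.ncard_image_of_injOn hAB.injOn]
  rw [hA]
  have hC : ({x : F | x ≠ 0 ∧ KP k x}).ncard = m := ncard_pows k hk0 hm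
  set D : Set F := {x : F | x ≠ 0 ∧ KP k x} \ {1} with hD
  have hDcard : D.ncard = m - 1 := by
    rw [hD, Set.ncard_diff_singleton_of_mem
      (show (1 : F) ∈ {x : F | x ≠ 0 ∧ KP k x} from ⟨one_ne_zero, KP_one k⟩), hC]
  have hBD : Bset F k = Set.offDiag D := by
    ext ⟨s, t⟩
    constructor
    · rintro ⟨⟨hs0, hsp⟩, hs1, ⟨ht0, htp⟩, ht1, hst⟩
      exact ⟨⟨⟨hs0, hsp⟩, hs1⟩, ⟨⟨ht0, htp⟩, ht1⟩, hst⟩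
    · rintro ⟨⟨⟨hs0, hsp⟩, hs1⟩, ⟨⟨ht0, htp⟩, ht1⟩, hst⟩
      exact ⟨⟨hs0, hsp⟩, hs1, ⟨ht0, htp⟩, ht1, hst⟩
  have hfin : D.Finite := Set.toFinite D
  have hoff : (Set.offDiag D).ncard = D.ncard * D.ncard - D.ncard := by
    have heq : Set.offDiag D = ↑(hfin.toFinset.offDiag) := by
      ext ⟨s, t⟩
      simp only [Set.mem_offDiag, Finset.coe_offDiag, Set.mem_offDiag,
        Set.Finite.coe_toFinset]
    rw [heq, Set.ncard_coe_finset, Finset.offDiag_card,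
      ← Set.ncard_eq_toFinset_card D hfin]
  rw [hBD, hoff, hDcard, hm]
  have e1 : k * m - k = k * (m - 1) := by rw [Nat.mul_sub, mul_one]
  have e2 : k * m - 2 * k = k * (m - 2) := by
    rw [Nat.mul_sub]; ring_nf
  rw [e1, e2]
  have e3 : k * (m - 1) * (k * (m - 2)) = k ^ 2 * ((m - 1) * (m - 2)) := by ring
  rw [e3, Nat.mul_div_cancel_left _ (by positivity : 0 < k ^ 2)]
  have e4 : m - 2 = (m - 1) - 1 := by omega
  rw [e4]
  conv_rhs => rw [Nat.mul_sub, mul_one]
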